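/- Let D be a set and F ⊆ B(D) be convex and compact. Then for every n, the diameter of information satisfies g_n^0(F, B(D)) ≤ 2(n+1)·ε_n(F, B(D)). -/

import Mathlib

open scoped Pointwise

noncomputable section

/-- `B(D)`: the space of bounded complex-valued functions on `D` with sup-norm,
modeled as `ℓ^∞(D, ℂ)`. -/
abbrev BD (D : Type*) : Type _ := ↥(lp (fun _ : D => ℂ) ⊤)

/-- The `n`-th sampling number of `F` in `B(D)`. -/
def samplingNum {D : Type*} (F : Set (BD D)) (n : ℕ) : ℝ :=
  ⨅ (x : Fin n → D) (φ : (Fin n → ℂ) → BD D),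
    ⨆ f ∈ F, ‖f - φ (fun k => (f : ∀ _ : D, ℂ) (x k))‖

/-- The `n`-th entropy number of `F` in a seminormed space `Y` (using `2^n` centers). -/
def entropyNum {Y : Type*} [SeminormedAddCommGroup Y] (F : Set Y) (n : ℕ) : ℝ :=
  ⨅ (y : Fin (2 ^ n) → Y), ⨆ f ∈ F, ⨅ i, ‖f - y i‖

/-- The `n`-th inner entropy number of `F` (using `2^n + 1` points of `F`). -/
def innerEntropyNum {Y : Type*} [SeminormedAddCommGroup Y] (F : Set Y) (n : ℕ) : ℝ :=
  ⨆ (y : Fin (2 ^ n + 1) → Y) (_ : ∀ i, y i ∈ F),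
    ⨅ p : {p : Fin (2 ^ n + 1) × Fin (2 ^ n + 1) // p.1 ≠ p.2}, ‖y p.1.1 - y p.1.2‖ / 2

/-- The (global) diameter of information of `F` in `B(D)`. -/
def diamInfo {D : Type*} (F : Set (BD D)) (n : ℕ) : ℝ :=
  ⨅ (x : Fin n → D), ⨆ f ∈ F, ⨆ g ∈ F,
    ⨆ (_ : ∀ k, (f : ∀ _ : D, ℂ) (x k) = (g : ∀ _ : D, ℂ) (x k)), ‖f - g‖

lemma lt_propSup {P : Prop} {r c : ℝ} (hc : 0 < c) (h : c < ⨆ _ : P, r) : P ∧ c < r := by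
  by_cases hP : P
  · haveI : Nonempty P := ⟨hP⟩
    rw [ciSup_const] at h
    exact ⟨hP, h⟩
  · haveI : IsEmpty P := ⟨hP⟩
    rw [Real.iSup_of_isEmpty] at h
    exact absurd h (not_lt.mpr hc.le)

lemma lt_memSup {α : Type*} [Nonempty α] {P : α → Prop} {t : α → ℝ} {c : ℝ} (hc : 0 < c)
    (h : c < ⨆ a, ⨆ (_ : P a), t a) : ∃ a, P a ∧ c < t a := by
  obtain ⟨a, ha⟩ := exists_lt_of_lt_ciSup h
  obtain ⟨hPa, hta⟩ := lt_propSup hc ha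
  exact ⟨a, hPa, hta⟩

lemma entropyNum_nonneg {Y : Type*} [SeminormedAddCommGroup Y] (F : Set Y) (n : ℕ) :
    0 ≤ entropyNum F n := by
  unfold entropyNum
  refine Real.iInf_nonneg fun y => ?_
  refine Real.iSup_nonneg fun f => ?_
  refine Real.iSup_nonneg fun _ => ?_
  exact Real.iInf_nonneg fun i => norm_nonneg _

lemma chain_exists {D : Type*} [Nonempty D] (F : Set (BD D)) {n : ℕ} {c : ℝ} (hc : 0 < c)
    (hd : ∀ x : Fin n → D, ∃ f, f ∈ F ∧ ∃ g, g ∈ F ∧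
      (∀ k, (f : ∀ _ : D, ℂ) (x k) = (g : ∀ _ : D, ℂ) (x k)) ∧ c < ‖f - g‖) :
    ∀ m, m ≤ n + 1 → ∃ (f g : Fin m → BD D) (x : Fin m → D),
      (∀ j, f j ∈ F) ∧ (∀ j, g j ∈ F) ∧
      (∀ j, c < ‖(f j : ∀ _ : D, ℂ) (x j) - (g j : ∀ _ : D, ℂ) (x j)‖) ∧
      (∀ j i : Fin m, i < j → (f j : ∀ _ : D, ℂ) (x i) = (g j : ∀ _ : D, ℂ) (x i)) := by
  intro m
  induction m with
  | zero =>
    intro _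
    exact ⟨Fin.elim0, Fin.elim0, Fin.elim0, fun j => j.elim0, fun j => j.elim0,
      fun j => j.elim0, fun j => j.elim0⟩
  | succ m ih =>
    intro hm
    obtain ⟨f, g, x, hf, hg, hsep, hvan⟩ := ih (Nat.le_of_succ_le hm)
    have hmn : m ≤ n := Nat.succ_le_succ_iff.mp hm
    set X : Fin n → D := fun k => if h : (k : ℕ) < m then x ⟨k, h⟩ else Classical.arbitrary D
      with hX
    obtain ⟨f', hf', g', hg', hagree, hnorm⟩ := hd X
    have hex : ∃ x' : D, c < ‖(f' : ∀ _ : D, ℂ) x' - (g' : ∀ _ : D, ℂ) x'‖ := by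
      by_contra hcon
      push_neg at hcon
      have : ‖f' - g'‖ ≤ c := by
        refine lp.norm_le_of_forall_le hc.le fun i => ?_
        have h2 : ((f' - g' : BD D) : ∀ _ : D, ℂ) i
            = (f' : ∀ _ : D, ℂ) i - (g' : ∀ _ : D, ℂ) i := by
          rw [lp.coeFn_sub]; rfl
        rw [h2]
        exact hcon i
      exact absurd hnorm (not_lt.mpr this)
    obtain ⟨x', hx'⟩ := hex
    refine ⟨Fin.snoc f f', Fin.snoc g g', Fin.snoc x x', ?_, ?_, ?_, ?_⟩
    · intro j
      induction j using Fin.lastCases with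
      | last => simpa using hf'
      | cast j' => simpa using hf j'
    · intro j
      induction j using Fin.lastCases with
      | last => simpa using hg'
      | cast j' => simpa using hg j'
    · intro j
      induction j using Fin.lastCases with
      | last => simpa using hx'
      | cast j' => simpa using hsep j'
    · intro j i hij
      induction j using Fin.lastCases with
      | last =>
        have hi : i ≠ Fin.last m := Fin.ne_last_of_lt hij
        obtain ⟨i', rfl⟩ := Fin.exists_castSucc_eq.mpr hi
        have hi'n : (i' : ℕ) < n := lt_of_lt_of_le i'.isLt hmn
        have h3 := hagree ⟨i', hi'n⟩
        have hXi : X ⟨i', hi'n⟩ = x i' := by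
          rw [hX]; simp [i'.isLt]
        rw [hXi] at h3
        simpa using h3
      | cast j' =>
        have hi : i ≠ Fin.last m := Fin.ne_last_of_lt (lt_of_lt_of_le hij (Fin.le_last _))
        obtain ⟨i', rfl⟩ := Fin.exists_castSucc_eq.mpr hi
        have hij' : i' < j' := by
          simpa [Fin.castSucc_lt_castSucc_iff] using hij
        simpa using hvan j' i' hij'

theorem diamInfo_le_entropy {D : Type*} (F : Set (BD D))
    (hconv : Convex ℝ F) (hcomp : IsCompact F) (n : ℕ) :
    diamInfo F n ≤ 2 * ((n : ℝ) + 1) * entropyNum F n := by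
  haveI : Nonempty (BD D) := ⟨0⟩
  have hE0 : 0 ≤ entropyNum F n := entropyNum_nonneg F n
  have hA : (0 : ℝ) < 2 * ((n : ℝ) + 1) := by positivity
  have hn1 : ((n : ℝ) + 1) ≠ 0 := by positivity
  -- main step
  have key : ∀ ε' : ℝ, entropyNum F n < ε' → diamInfo F n ≤ 2 * ((n : ℝ) + 1) * ε' := by
    intro ε' hε'
    by_contra hlt
    push_neg at hlt
    set c : ℝ := 2 * ((n : ℝ) + 1) * ε' with hcdef
    have hε'pos : 0 < ε' := lt_of_le_of_lt hE0 hε'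
    have hcpos : 0 < c := mul_pos hA hε'pos
    have hS0 : ∀ x : Fin n → D, (0 : ℝ) ≤ ⨆ f ∈ F, ⨆ g ∈ F,
        ⨆ (_ : ∀ k, (f : ∀ _ : D, ℂ) (x k) = (g : ∀ _ : D, ℂ) (x k)), ‖f - g‖ := by
      intro x
      refine Real.iSup_nonneg fun f => Real.iSup_nonneg fun _ => ?_
      refine Real.iSup_nonneg fun g => Real.iSup_nonneg fun _ => ?_
      exact Real.iSup_nonneg fun _ => norm_nonneg _
    have hdbdd : BddBelow (Set.range fun x : Fin n → D => ⨆ f ∈ F, ⨆ g ∈ F,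
        ⨆ (_ : ∀ k, (f : ∀ _ : D, ℂ) (x k) = (g : ∀ _ : D, ℂ) (x k)), ‖f - g‖) := by
      refine ⟨0, ?_⟩
      rintro _ ⟨x, rfl⟩
      exact hS0 x
    have hSx : ∀ x : Fin n → D, c < ⨆ f ∈ F, ⨆ g ∈ F,
        ⨆ (_ : ∀ k, (f : ∀ _ : D, ℂ) (x k) = (g : ∀ _ : D, ℂ) (x k)), ‖f - g‖ := by
      intro x
      exact lt_of_lt_of_le hlt (ciInf_le hdbdd x)
    have hd : ∀ x : Fin n → D, ∃ f, f ∈ F ∧ ∃ g, g ∈ F ∧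
        (∀ k, (f : ∀ _ : D, ℂ) (x k) = (g : ∀ _ : D, ℂ) (x k)) ∧ c < ‖f - g‖ := by
      intro x
      obtain ⟨f, hfF, h2⟩ := lt_memSup hcpos (hSx x)
      obtain ⟨g, hgF, h3⟩ := lt_memSup hcpos h2
      obtain ⟨hcond, h4⟩ := lt_propSup hcpos h3
      exact ⟨f, hfF, g, hgF, hcond, h4⟩
    cases isEmpty_or_nonempty D with
    | inl hD =>
      rcases Nat.eq_zero_or_pos n with hn | hn
      · subst hn
        obtain ⟨f, _, g, _, _, h4⟩ := hd Fin.elim0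
        have h5 : ‖f - g‖ = ⨆ i : D, ‖((f - g : BD D) : ∀ _ : D, ℂ) i‖ := lp.norm_eq_ciSup _
        rw [Real.iSup_of_isEmpty] at h5
        rw [h5] at h4
        exact absurd h4 (not_lt.mpr hcpos.le)
      · haveI : IsEmpty (Fin n → D) := ⟨fun x => hD.false (x ⟨0, hn⟩)⟩
        have h0 : diamInfo F n = 0 := by
          unfold diamInfo
          exact Real.iInf_of_isEmpty _
        rw [h0] at hlt
        exact absurd hlt (not_lt.mpr hcpos.le)
    | inr hD =>
      obtain ⟨f, g, x, hFf, hFg, hsep, hvan⟩ := chain_exists F hcpos hd (n + 1) le_rfl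
      set w : ℝ := ((n : ℝ) + 1)⁻¹ with hwdef
      have hw : 0 < w := by positivity
      set p : (Fin (n + 1) → Bool) → Fin (n + 1) → BD D :=
        fun ξ j => if ξ j then f j else g j with hp
      set h : (Fin (n + 1) → Bool) → BD D := fun ξ => ∑ j, w • p ξ j with hh
      have hwsum : ∑ _j : Fin (n + 1), w = 1 := by
        rw [Finset.sum_const, Finset.card_univ, Fintype.card_fin, nsmul_eq_mul]
        push_cast
        exact mul_inv_cancel₀ hn1
      have hmem : ∀ ξ, h ξ ∈ F := by
        intro ξ
        simp only [hh]
        refine hconv.sum_mem (fun i _ => hw.le) hwsum fun i _ => ?_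
        by_cases hb : ξ i = true
        · simpa [hp, hb] using hFf i
        · simp only [Bool.not_eq_true] at hb
          simpa [hp, hb] using hFg i
      have hcoe : ∀ (ξ : Fin (n + 1) → Bool) (z : D),
          ((h ξ : BD D) : ∀ _ : D, ℂ) z = ∑ j, w • ((p ξ j : BD D) : ∀ _ : D, ℂ) z := by
        intro ξ z
        simp only [hh]
        have h1 : ((∑ j, w • p ξ j : BD D) : ∀ _ : D, ℂ)
            = ∑ j, ((w • p ξ j : BD D) : ∀ _ : D, ℂ) :=
          lp.coeFn_sum (fun j => w • p ξ j) Finset.univ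
        rw [h1, Finset.sum_apply]
        refine Finset.sum_congr rfl fun j _ => ?_
        rw [lp.coeFn_smul, Pi.smul_apply]
      have hsepfull : ∀ ξ η : Fin (n + 1) → Bool, ξ ≠ η → w * c < ‖h ξ - h η‖ := by
        intro ξ η hne
        set S : Finset (Fin (n + 1)) := Finset.univ.filter (fun j => ξ j ≠ η j) with hS
        have hSne : S.Nonempty := by
          obtain ⟨j, hj⟩ := Function.ne_iff.mp hne
          exact ⟨j, by simp [hS, hj]⟩
        set j0 := S.min' hSne with hj0def
        have hj0 : ξ j0 ≠ η j0 := by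
          have := S.min'_mem hSne
          simpa [hS] using this
        have hmin : ∀ j, j < j0 → ξ j = η j := by
          intro j hj
          by_contra hne'
          exact absurd (S.min'_le j (by simp [hS, hne'])) (not_le.mpr hj)
        have hterm : ∀ j, j ≠ j0 →
            w • ((p ξ j : BD D) : ∀ _ : D, ℂ) (x j0)
              - w • ((p η j : BD D) : ∀ _ : D, ℂ) (x j0) = 0 := by
          intro j hjne
          rcases lt_or_gt_of_ne hjne with hlt' | hgt'
          · have hpe : p ξ j = p η j := by simp only [hp, hmin j hlt']
            rw [hpe]
            exact sub_self _
          · have hv := hvan j j0 hgt'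
            have heq : ((p ξ j : BD D) : ∀ _ : D, ℂ) (x j0)
                = ((p η j : BD D) : ∀ _ : D, ℂ) (x j0) := by
              cases hb1 : ξ j <;> cases hb2 : η j <;> simp [hp, hb1, hb2, hv]
            rw [heq]
            exact sub_self _
        have hval : ((h ξ - h η : BD D) : ∀ _ : D, ℂ) (x j0)
            = w • (((p ξ j0 : BD D) : ∀ _ : D, ℂ) (x j0)
                - ((p η j0 : BD D) : ∀ _ : D, ℂ) (x j0)) := by
          have h1 : ((h ξ - h η : BD D) : ∀ _ : D, ℂ) (x j0)
              = ((h ξ : BD D) : ∀ _ : D, ℂ) (x j0) - ((h η : BD D) : ∀ _ : D, ℂ) (x j0) := by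
            rw [lp.coeFn_sub]; rfl
          rw [h1, hcoe ξ, hcoe η, ← Finset.sum_sub_distrib]
          rw [Finset.sum_eq_single j0]
          · rw [smul_sub]
          · intro j _ hjne
            exact hterm j hjne
          · intro habs
            exact absurd (Finset.mem_univ j0) habs
        have hnormval : w * c < ‖((h ξ - h η : BD D) : ∀ _ : D, ℂ) (x j0)‖ := by
          rw [hval, norm_smul, Real.norm_eq_abs, abs_of_pos hw]
          refine mul_lt_mul_of_pos_left ?_ hw
          cases hb1 : ξ j0 <;> cases hb2 : η j0
          · exact absurd (hb1.trans hb2.symm) hj0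
          · simp only [hp, hb1, hb2, if_true, if_false]
            rw [norm_sub_rev]
            exact hsep j0
          · simp only [hp, hb1, hb2, if_true, if_false]
            exact hsep j0
          · exact absurd (hb1.trans hb2.symm) hj0
        calc w * c < ‖((h ξ - h η : BD D) : ∀ _ : D, ℂ) (x j0)‖ := hnormval
          _ ≤ ‖h ξ - h η‖ := lp.norm_apply_le_norm ENNReal.top_ne_zero _ _
      -- entropy side
      have hE' : (⨅ (y : Fin (2 ^ n) → BD D), ⨆ f ∈ F, ⨅ i, ‖f - y i‖) < ε' := hε'
      obtain ⟨y, hy⟩ := exists_lt_of_ciInf_lt hE'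
      obtain ⟨R, hR⟩ := isBounded_iff_forall_norm_le.mp hcomp.isBounded
      set i0 : Fin (2 ^ n) := ⟨0, by positivity⟩ with hi0
      have hbddA : BddAbove (Set.range fun f : BD D =>
          ⨆ (_ : f ∈ F), ⨅ i, ‖f - y i‖) := by
        refine ⟨max (R + ‖y i0‖) 0, ?_⟩
        rintro _ ⟨f, rfl⟩
        dsimp only
        by_cases hfF : f ∈ F
        · haveI : Nonempty (f ∈ F) := ⟨hfF⟩
          rw [ciSup_const]
          refine le_max_of_le_left ?_
          have hle : (⨅ i, ‖f - y i‖) ≤ ‖f - y i0‖ :=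
            ciInf_le ⟨0, by rintro _ ⟨i, rfl⟩; exact norm_nonneg _⟩ i0
          have h6 := norm_sub_le f (y i0)
          have h7 := hR f hfF
          linarith
        · haveI : IsEmpty (f ∈ F) := ⟨hfF⟩
          rw [Real.iSup_of_isEmpty]
          exact le_max_right _ _
      have hnear : ∀ ξ : Fin (n + 1) → Bool, ∃ i, ‖h ξ - y i‖ < ε' := by
        intro ξ
        have hfF := hmem ξ
        have h1 : (⨆ (_ : h ξ ∈ F), ⨅ i, ‖h ξ - y i‖)
            ≤ ⨆ f ∈ F, ⨅ i, ‖f - y i‖ := le_ciSup hbddA (h ξ)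
        haveI : Nonempty (h ξ ∈ F) := ⟨hfF⟩
        rw [ciSup_const] at h1
        exact exists_lt_of_ciInf_lt (lt_of_le_of_lt h1 hy)
      choose φ hφ using hnear
      have hcard : Fintype.card (Fin (2 ^ n)) < Fintype.card (Fin (n + 1) → Bool) := by
        simp only [Fintype.card_fin, Fintype.card_fun, Fintype.card_bool]
        exact Nat.pow_lt_pow_right one_lt_two (Nat.lt_succ_self n)
      obtain ⟨ξ, η, hne, heq⟩ := Fintype.exists_ne_map_eq_of_card_lt φ hcard
      have hsep2 := hsepfull ξ η hne
      have htri : ‖h ξ - h η‖ ≤ ‖h ξ - y (φ ξ)‖ + ‖h η - y (φ η)‖ := by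
        calc ‖h ξ - h η‖ = ‖(h ξ - y (φ ξ)) - (h η - y (φ η))‖ := by
              rw [heq, sub_sub_sub_cancel_right]
          _ ≤ ‖h ξ - y (φ ξ)‖ + ‖h η - y (φ η)‖ := norm_sub_le _ _
      have hwc : w * c = 2 * ε' := by
        rw [hwdef, hcdef]
        field_simp
      have hφξ := hφ ξ
      have hφη := hφ η
      linarith
  -- conclude
  by_contra hfin
  push_neg at hfin
  set E := entropyNum F n with hE
  set d := diamInfo F n with hdd
  set A : ℝ := 2 * ((n : ℝ) + 1) with hAdef
  set ε' : ℝ := (d / A + E) / 2 with hε'def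
  have h1 : E < d / A := (lt_div_iff₀ hA).mpr (by rw [mul_comm] at hfin ⊢; linarith)
  have h2 : E < ε' := by rw [hε'def]; linarith
  have h3 := key ε' h2
  have h4 : A * ε' < d := by
    have h5 : ε' < d / A := by rw [hε'def]; linarith
    calc A * ε' < A * (d / A) := mul_lt_mul_of_pos_left h5 hA
      _ = d := by field_simp
  linarith
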